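/- Let K be a field of characteristic zero, L, M ∈ K[x]⟨∂⟩ linear differential operators, and A, B ∈ K(x) nonzero rational functions such that M∘A = B∘L as operators on K(x) (where A, B act by multiplication). If [·]_L is a canonical form with respect to L, then the map R ↦ B·[R/B]_L is a canonical form with respect to M, i.e., it is K-linear, vanishes on M(K(x)), and satisfies R − B·[R/B]_L ∈ M(K(x)) for all R ∈ K(x). -/

import Mathlib

open Polynomial

/-- The derivative of a rational function, `(p/q)' = (p'q − pq')/q²`. -/
noncomputable def ratDeriv {K : Type*} [Field K] (f : RatFunc K) : RatFunc K :=
  (algebraMap K[X] (RatFunc K) (derivative f.num) * algebraMap K[X] (RatFunc K) f.denom -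
      algebraMap K[X] (RatFunc K) f.num * algebraMap K[X] (RatFunc K) (derivative f.denom)) /
    algebraMap K[X] (RatFunc K) (f.denom ^ 2)

/-- The action of the differential operator `M = ∑_{i=0}^r pᵢ ∂ⁱ` (with polynomial
coefficients `pᵢ`) on a rational function. -/
noncomputable def applyOp {K : Type*} [Field K] (r : ℕ) (p : ℕ → K[X]) (f : RatFunc K) :
    RatFunc K :=
  ∑ i ∈ Finset.range (r + 1), algebraMap K[X] (RatFunc K) (p i) * ratDeriv^[i] f

/-- `f` has no pole at `α`. -/
def regAt {K : Type*} [Field K] (α : K) (f : RatFunc K) : Prop :=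
  Polynomial.eval α f.denom ≠ 0

/-- `ord_α f ≥ m` : the valuation of `f` at `α` (as a Laurent series in `x − α`)
is at least `m`. -/
def ordGe {K : Type*} [Field K] (α : K) (m : ℤ) (f : RatFunc K) : Prop :=
  regAt α ((RatFunc.X - RatFunc.C α) ^ (-m) * f)

/-- `f` has degree (order at infinity, negated) at most `m`, i.e. `ord_∞ f ≥ −m`. -/
def degLe {K : Type*} [Field K] (m : ℤ) (f : RatFunc K) : Prop :=
  f = 0 ∨ RatFunc.intDegree f ≤ m

/-- rational factors: if `M∘A = B∘L` with `A, B ∈ K(x)` nonzero acting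
by multiplication, and `[·]_L` is a canonical form w.r.t. `L`, then `R ↦ B·[R/B]_L`
is a canonical form w.r.t. `M`: it is `K`-linear, vanishes on `M(K(x))`, and
`R − B·[R/B]_L ∈ M(K(x))` for all `R`. -/
theorem rational_factor_canonical_form {K : Type*} [Field K] [CharZero K]
    (rL rM : ℕ) (qL pM : ℕ → K[X]) (A B : RatFunc K) (hA : A ≠ 0) (hB : B ≠ 0)
    (hcomp : ∀ f : RatFunc K, applyOp rM pM (A * f) = B * applyOp rL qL f)
    (cL : RatFunc K →ₗ[K] RatFunc K)
    (hcL1 : ∀ R : RatFunc K, cL (applyOp rL qL R) = 0)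
    (hcL2 : ∀ R : RatFunc K, R - cL R ∈ Set.range (applyOp rL qL)) :
    (∀ (a : K) (R₁ R₂ : RatFunc K),
      B * cL ((a • R₁ + R₂) / B) = a • (B * cL (R₁ / B)) + B * cL (R₂ / B)) ∧
    (∀ R : RatFunc K, B * cL (applyOp rM pM R / B) = 0) ∧
    (∀ R : RatFunc K, R - B * cL (R / B) ∈ Set.range (applyOp rM pM)) := by
  refine ⟨?_, ?_, ?_⟩
  · intro a R₁ R₂
    have : (a • R₁ + R₂) / B = a • (R₁ / B) + R₂ / B := by
      field_simp
      rw [mul_smul_comm, mul_div_cancel₀ R₁ hB]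
    rw [this, map_add, map_smul, mul_add, mul_smul_comm]
  · intro R
    have h := hcomp (R / A)
    rw [mul_div_cancel₀ R hA] at h
    rw [h, mul_div_cancel_left₀ _ hB, hcL1, mul_zero]
  · intro R
    obtain ⟨f, hf⟩ := hcL2 (R / B)
    refine ⟨A * f, ?_⟩
    rw [hcomp f, hf, mul_sub, mul_div_cancel₀ R hB]
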